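/- Specialization of the Potts model partition function to the flow polynomial: Let G = (V, E, ε) be a finite multigraph, fix an orientation (s, t) of G, let q be a positive integer and H any finite abelian group of cardinality q. Then the number of nowhere-zero H-flows of G equals ∑_{A ⊆ E} (−1)^{|E| + |A|} q^{|A| − |V| + k_G(A)}, as an identity in ℚ (the exponent |A| − |V| + k_G(A) is a nonnegative integer for each A). -/

import Mathlib

open Finset

/-- The number of connected components of the spanning subgraph `(V, A)` of the
multigraph given by `ε : E → Sym2 V`. -/
noncomputable def multigraphComponents {V E : Type*} (ε : E → Sym2 V) (A : Finset E) : ℕ :=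
  Nat.card (SimpleGraph.fromEdgeSet (ε '' (A : Set E))).ConnectedComponent

/-- The number of nowhere-zero `H`-flows of the multigraph with edge set `S` and
orientation given by source and target maps `s t : E → V`. -/
noncomputable def nzFlowCount {V E : Type*} [Fintype V] [Fintype E] [DecidableEq V]
    (s t : E → V) (S : Finset E) (H : Type*) [AddCommGroup H] [Fintype H] : ℕ :=
  Nat.card {φ : {e : E // e ∈ S} → H //
    (∀ x : V, (∑ e : {e : E // e ∈ S}, if s e.1 = x then φ e else 0) =
              (∑ e : {e : E // e ∈ S}, if t e.1 = x then φ e else 0)) ∧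
    ∀ e, φ e ≠ 0}

section Aux

variable {V E : Type*} [Fintype V] [Fintype E] [DecidableEq V] [DecidableEq E]
variable (H : Type*) [AddCommGroup H] [Fintype H]

/-- The boundary map of an oriented multigraph restricted to edge set `A`. -/
noncomputable def bmap (s t : E → V) (A : Finset E) :
    ({e : E // e ∈ A} → H) →+ (V → H) where
  toFun φ := fun x => (∑ e : {e : E // e ∈ A}, if s e.1 = x then φ e else 0)
      - (∑ e : {e : E // e ∈ A}, if t e.1 = x then φ e else 0)
  map_zero' := by funext x; simp
  map_add' φ ψ := by
    funext x
    have h1 : ∀ (u : E → V),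
        (∑ e : {e : E // e ∈ A}, if u e.1 = x then φ e + ψ e else 0)
        = (∑ e : {e : E // e ∈ A}, if u e.1 = x then φ e else 0)
          + (∑ e : {e : E // e ∈ A}, if u e.1 = x then ψ e else 0) := by
      intro u
      rw [← Finset.sum_add_distrib]
      refine Finset.sum_congr rfl fun e _ => ?_
      split_ifs <;> simp
    simp only [Pi.add_apply, h1]
    abel

@[simp] lemma bmap_apply (s t : E → V) (A : Finset E) (φ : {e : E // e ∈ A} → H) (x : V) :
    bmap H s t A φ x = (∑ e : {e : E // e ∈ A}, if s e.1 = x then φ e else 0)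
      - (∑ e : {e : E // e ∈ A}, if t e.1 = x then φ e else 0) := rfl

end Aux

example : True := trivial

set_option linter.unusedSectionVars false

section Main

variable {V E : Type*} [Fintype V] [Fintype E] [DecidableEq V] [DecidableEq E]
variable (H : Type*) [AddCommGroup H] [Fintype H]

theorem bmap_ker_card (ε : E → Sym2 V) (s t : E → V) (hst : ∀ e, ε e = s(s e, t e))
    (A : Finset E) :
    Nat.card (bmap H s t A).ker * Fintype.card H ^ Fintype.card V
      = Fintype.card H ^ (A.card + multigraphComponents ε A) := by
  classical
  set G : SimpleGraph V := SimpleGraph.fromEdgeSet (ε '' (A : Set E)) with hG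
  haveI : Finite G.ConnectedComponent := Quot.finite _
  -- the component-sum map
  set σ : (V → H) →+ (G.ConnectedComponent → H) :=
    { toFun := fun f => fun c => ∑ x : V, if G.connectedComponentMk x = c then f x else 0
      map_zero' := by funext c; simp
      map_add' := by
        intro f g
        funext c
        simp only [Pi.add_apply]
        rw [← Finset.sum_add_distrib]
        refine Finset.sum_congr rfl fun x _ => ?_
        split_ifs <;> simp } with hσ
  have σ_apply : ∀ (f : V → H) (c), σ f c
      = ∑ x : V, if G.connectedComponentMk x = c then f x else 0 := fun f c => rfl
  -- endpoints of an edge in `A` lie in the same component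
  have hcomp : ∀ e ∈ A, G.connectedComponentMk (s e) = G.connectedComponentMk (t e) := by
    intro e he
    by_cases h : s e = t e
    · rw [h]
    · refine SimpleGraph.ConnectedComponent.connectedComponentMk_eq_of_adj ?_
      rw [hG, SimpleGraph.fromEdgeSet_adj]
      exact ⟨⟨e, he, hst e⟩, h⟩
  have hrange : (bmap H s t A).range = σ.ker := by
    apply le_antisymm
    · rintro f ⟨φ, rfl⟩
      rw [AddMonoidHom.mem_ker]
      funext c
      have part : ∀ u : E → V,
          (∑ x : V, if G.connectedComponentMk x = c then
            (∑ e : {e : E // e ∈ A}, if u e.1 = x then φ e else 0) else 0)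
          = ∑ e : {e : E // e ∈ A}, if G.connectedComponentMk (u e.1) = c then φ e else 0 := by
        intro u
        have step1 : ∀ x : V, (if G.connectedComponentMk x = c then
            (∑ e : {e : E // e ∈ A}, if u e.1 = x then φ e else 0) else 0)
            = ∑ e : {e : E // e ∈ A},
                if u e.1 = x then (if G.connectedComponentMk x = c then φ e else 0) else 0 := by
          intro x
          split_ifs with h <;> simp [h]
        simp only [step1]
        rw [Finset.sum_comm]
        refine Finset.sum_congr rfl fun e _ => ?_
        rw [Finset.sum_ite_eq]
        simp
      have exp : σ (bmap H s t A φ) c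
          = (∑ x : V, if G.connectedComponentMk x = c then
              (∑ e : {e : E // e ∈ A}, if s e.1 = x then φ e else 0) else 0)
            - (∑ x : V, if G.connectedComponentMk x = c then
              (∑ e : {e : E // e ∈ A}, if t e.1 = x then φ e else 0) else 0) := by
        rw [σ_apply, ← Finset.sum_sub_distrib]
        refine Finset.sum_congr rfl fun x _ => ?_
        rw [bmap_apply]
        split_ifs with h
        · rfl
        · rw [sub_zero]
      rw [exp, part s, part t, ← Finset.sum_sub_distrib]
      refine Finset.sum_eq_zero fun e _ => ?_
      rw [hcomp e.1 e.2, sub_self]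
    · -- kernel of σ is contained in the range of the boundary map
      intro f hf
      rw [AddMonoidHom.mem_ker] at hf
      -- elementary "dipole" functions along edges are in the range
      have key : ∀ e : E, e ∈ A → ∀ h : H,
          (fun y => (if y = s e then h else 0) - (if y = t e then h else 0))
            ∈ (bmap H s t A).range := by
        intro e he h
        refine ⟨fun e' => if e'.1 = e then h else 0, ?_⟩
        funext y
        rw [bmap_apply]
        have comp1 : ∀ u : E → V,
            (∑ e' : {e : E // e ∈ A}, if u e'.1 = y then (if e'.1 = e then h else 0) else 0)
            = (if y = u e then h else 0) := by
          intro u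
          rw [Fintype.sum_eq_single (⟨e, he⟩ : {e : E // e ∈ A})]
          · simp [eq_comm]
          · intro b hb
            have : b.1 ≠ e := fun hbe => hb (Subtype.ext hbe)
            simp [this]
        rw [comp1 s, comp1 t]
      -- dipoles between reachable vertices are in the range
      have hadj : ∀ u v : V, G.Adj u v → ∀ h : H,
          (fun y => (if y = u then h else 0) - (if y = v then h else 0))
            ∈ (bmap H s t A).range := by
        intro u v huv h
        rw [hG, SimpleGraph.fromEdgeSet_adj] at huv
        obtain ⟨⟨e, he, hee⟩, hne⟩ := huv
        rw [hst e, Sym2.eq_iff] at hee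
        rcases hee with ⟨h1, h2⟩ | ⟨h1, h2⟩
        · rw [← h1, ← h2]; exact key e he h
        · have mem := key e he (-h)
          have heq : (fun y => (if y = u then h else 0) - (if y = v then h else 0))
              = (fun y => (if y = s e then (-h) else 0) - (if y = t e then (-h) else 0)) := by
            funext y
            rw [h1, h2]
            split_ifs <;> abel
          rw [heq]; exact mem
      have hreach : ∀ u v : V, G.Reachable u v → ∀ h : H,
          (fun y => (if y = u then h else 0) - (if y = v then h else 0))
            ∈ (bmap H s t A).range := by
        intro u v hr h
        obtain ⟨w⟩ := hr
        induction w with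
        | nil =>
          have hz : ∀ u' : V,
              (fun y => (if y = u' then h else 0) - (if y = u' then h else 0)) = (0 : V → H) := by
            intro u'; funext y; simp
          rw [hz]; exact zero_mem _
        | @cons a b v2 hab p ih =>
          have heq : (fun y => (if y = a then h else 0) - (if y = v2 then h else 0))
              = (fun y => (if y = a then h else 0) - (if y = b then h else 0))
                + (fun y => (if y = b then h else 0) - (if y = v2 then h else 0)) := by
            funext y; simp only [Pi.add_apply]; abel
          rw [heq]
          exact add_mem (hadj a b hab h) ih
      -- the root of each component
      set root : V → V := fun x => Quot.out (G.connectedComponentMk x) with hroot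
      have hroot_comp : ∀ x, G.connectedComponentMk (root x) = G.connectedComponentMk x := by
        intro x
        exact Quot.out_eq _
      have hroot_congr : ∀ x y : V,
          G.connectedComponentMk x = G.connectedComponentMk y → root x = root y := by
        intro x y hxy
        rw [hroot]
        simp only
        rw [hxy]
      -- decompose f as a sum of dipoles
      have hdecomp : f = ∑ x : V,
          (fun y => (if y = x then f x else 0) - (if y = root x then f x else 0)) := by
        funext y
        rw [Finset.sum_apply]
        have hsplit : ∑ x : V, ((if y = x then f x else 0) - (if y = root x then f x else 0))
            = (∑ x : V, if y = x then f x else 0) - (∑ x : V, if y = root x then f x else 0) :=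
          Finset.sum_sub_distrib _ _
        rw [hsplit, Finset.sum_ite_eq]
        have h2 : (∑ x : V, if y = root x then f x else 0) = 0 := by
          by_cases hy : root y = y
          · have hfy := congrFun hf (G.connectedComponentMk y)
            rw [σ_apply] at hfy
            simp only [Pi.zero_apply] at hfy
            have hsum : (∑ x : V, if y = root x then f x else 0)
                = ∑ x : V,
                    if G.connectedComponentMk x = G.connectedComponentMk y then f x else 0 := by
              refine Finset.sum_congr rfl fun x _ => if_congr ⟨fun hx => ?_, fun hx => ?_⟩ rfl rfl
              · rw [hx, hroot_comp x]
              · rw [hroot_congr x y hx, hy]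
            rw [hsum]; exact hfy
          · refine Finset.sum_eq_zero fun x _ => ?_
            rw [if_neg]
            intro hxy
            apply hy
            have hcc : G.connectedComponentMk y = G.connectedComponentMk x := by
              rw [hxy, hroot_comp x]
            rw [← hroot_congr x y hcc.symm, ← hxy]
        rw [h2, sub_zero, if_pos (Finset.mem_univ y)]
      rw [hdecomp]
      refine sum_mem fun x _ => ?_
      refine hreach x (root x) ?_ (f x)
      exact SimpleGraph.ConnectedComponent.exact (hroot_comp x).symm
  have hσsurj : Function.Surjective σ := by
    intro g
    refine ⟨fun y => if y = Quot.out (G.connectedComponentMk y)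
      then g (G.connectedComponentMk y) else 0, ?_⟩
    have hout : ∀ c : G.ConnectedComponent, G.connectedComponentMk (Quot.out c) = c :=
      fun c => Quot.out_eq c
    funext c
    rw [σ_apply]
    rw [Fintype.sum_eq_single (Quot.out c)]
    · rw [hout c]
      simp
    · intro b hb
      split_ifs with h1 h2
      · exact absurd (by rw [h1] at h2; exact h2) hb
      · rfl
      · rfl
  -- cardinality bookkeeping
  have hq1 : Fintype.card H ^ A.card
      = Nat.card (bmap H s t A).range * Nat.card (bmap H s t A).ker := by
    have h0 : Nat.card ({e : E // e ∈ A} → H) = Fintype.card H ^ A.card := by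
      rw [Nat.card_fun]
      simp [Nat.card_eq_fintype_card]
    rw [← h0, AddSubgroup.card_eq_card_quotient_mul_card_addSubgroup (bmap H s t A).ker]
    congr 1
    exact Nat.card_congr (QuotientAddGroup.quotientKerEquivRange (bmap H s t A)).toEquiv
  have hq2 : Fintype.card H ^ Fintype.card V
      = Fintype.card H ^ (multigraphComponents ε A) * Nat.card σ.ker := by
    have h0 : Nat.card (V → H) = Fintype.card H ^ Fintype.card V := by
      rw [Nat.card_fun]; simp [Nat.card_eq_fintype_card]
    have h1 : Nat.card (G.ConnectedComponent → H)
        = Fintype.card H ^ (multigraphComponents ε A) := by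
      rw [Nat.card_fun]
      simp [Nat.card_eq_fintype_card, multigraphComponents, hG]
    rw [← h0, ← h1, AddSubgroup.card_eq_card_quotient_mul_card_addSubgroup σ.ker]
    congr 1
    exact Nat.card_congr (QuotientAddGroup.quotientKerEquivOfSurjective σ hσsurj).toEquiv
  calc Nat.card (bmap H s t A).ker * Fintype.card H ^ Fintype.card V
      = Nat.card (bmap H s t A).ker *
        (Fintype.card H ^ (multigraphComponents ε A) * Nat.card σ.ker) := by rw [hq2]
    _ = (Nat.card (bmap H s t A).range * Nat.card (bmap H s t A).ker) *
        Fintype.card H ^ (multigraphComponents ε A) := by rw [hrange]; ring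
    _ = Fintype.card H ^ A.card * Fintype.card H ^ (multigraphComponents ε A) := by rw [← hq1]
    _ = Fintype.card H ^ (A.card + multigraphComponents ε A) := (pow_add _ _ _).symm

end Main

lemma ie_lemma {E : Type*} [Fintype E] [DecidableEq E] (S : Finset E) :
    (∑ A ∈ (univ : Finset E).powerset, (-1 : ℚ) ^ (Fintype.card E + A.card) *
      (if S ⊆ A then 1 else 0))
    = if S = univ then 1 else 0 := by
  classical
  simp only [mul_ite, mul_one, mul_zero]
  rw [← Finset.sum_filter]
  have hbij : ∑ A ∈ ((univ : Finset E).powerset.filter (fun A => S ⊆ A)),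
      (-1 : ℚ) ^ (Fintype.card E + A.card)
      = ∑ C ∈ (univ \ S).powerset, (-1 : ℚ) ^ (Fintype.card E + S.card + C.card) := by
    refine Finset.sum_bij' (fun A _ => A \ S) (fun C _ => S ∪ C) ?_ ?_ ?_ ?_ ?_
    · intro A hA
      rw [Finset.mem_filter] at hA
      exact Finset.mem_powerset.2 (Finset.sdiff_subset_sdiff (Finset.subset_univ A)
        (Finset.Subset.refl S))
    · intro C hC
      rw [Finset.mem_filter]
      exact ⟨Finset.mem_powerset.2 (Finset.subset_univ _), Finset.subset_union_left⟩
    · intro A hA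
      rw [Finset.mem_filter] at hA
      exact Finset.union_sdiff_of_subset hA.2
    · intro C hC
      rw [Finset.mem_powerset] at hC
      refine Finset.union_sdiff_cancel_left ?_
      exact Finset.disjoint_of_subset_right hC Finset.disjoint_sdiff
    · intro A hA
      rw [Finset.mem_filter] at hA
      congr 1
      rw [add_assoc]
      congr 1
      rw [← Finset.card_sdiff_add_card_eq_card hA.2, add_comm]
  rw [hbij]
  have hfactor : ∀ C : Finset E, (-1 : ℚ) ^ (Fintype.card E + S.card + C.card)
      = (-1 : ℚ) ^ (Fintype.card E + S.card) * (-1 : ℚ) ^ C.card := fun C => pow_add _ _ _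
  simp only [hfactor]
  rw [← Finset.mul_sum]
  have hps : (∑ C ∈ (univ \ S).powerset, (-1 : ℚ) ^ C.card)
      = if (univ \ S : Finset E) = ∅ then 1 else 0 := by
    have := Finset.sum_powerset_neg_one_pow_card (x := (univ \ S : Finset E))
    exact_mod_cast congrArg (fun z : ℤ => (z : ℚ)) this
  rw [hps]
  by_cases hS : S = univ
  · subst hS
    rw [Finset.sdiff_self, if_pos rfl, if_pos rfl, mul_one, Finset.card_univ]
    exact Even.neg_one_pow ⟨Fintype.card E, rfl⟩
  · have h1 : (univ \ S : Finset E) ≠ ∅ := by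
      intro h
      apply hS
      have := Finset.sdiff_eq_empty_iff_subset.1 h
      exact Finset.Subset.antisymm (Finset.subset_univ S) this
    rw [if_neg h1, if_neg hS, mul_zero]

lemma card_subtype_q {α : Type*} [Fintype α] (p : α → Prop) [DecidablePred p] :
    (Nat.card {x // p x} : ℚ) = ∑ x : α, if p x then 1 else 0 := by
  rw [Nat.card_eq_fintype_card, Fintype.card_subtype, Finset.card_filter]
  push_cast
  rfl

section Glue

variable {V E : Type*} [Fintype V] [Fintype E] [DecidableEq V] [DecidableEq E]
variable (H : Type*) [AddCommGroup H] [Fintype H]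

lemma sum_restrict (A : Finset E) (φ : E → H) (hφ : ∀ e ∉ A, φ e = 0) (u : E → V) (x : V) :
    (∑ e : E, if u e = x then φ e else 0)
      = ∑ e : {e : E // e ∈ A}, if u e.1 = x then φ e.1 else 0 := by
  have h1 : (∑ e : E, if u e = x then φ e else 0)
      = ∑ e ∈ A, (if u e = x then φ e else 0) := by
    refine (Finset.sum_subset (Finset.subset_univ A) fun e _ he => ?_).symm
    rw [hφ e he]
    split_ifs <;> rfl
  rw [h1, ← Finset.sum_coe_sort A (fun e => if u e = x then φ e else 0)]

lemma ker_count (s t : E → V) (A : Finset E) :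
    Nat.card (bmap H s t A).ker
      = Nat.card {φ : E → H //
          (∀ x : V, (∑ e : E, if s e = x then φ e else 0)
            = (∑ e : E, if t e = x then φ e else 0)) ∧ ∀ e ∉ A, φ e = 0} := by
  apply Nat.card_congr
  refine ⟨fun φ => ⟨fun e => if h : e ∈ A then φ.1 ⟨e, h⟩ else 0, ?_, fun e he => dif_neg he⟩,
    fun φ => ⟨fun e => φ.1 e.1, ?_⟩, ?_, ?_⟩
  · -- Kirchhoff for the extension by zero
    intro x
    have hker := φ.2
    rw [AddMonoidHom.mem_ker] at hker
    have hx := congrFun hker x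
    rw [bmap_apply, Pi.zero_apply, sub_eq_zero] at hx
    have hvan : ∀ e ∉ A, (if h : e ∈ A then φ.1 ⟨e, h⟩ else 0) = 0 := fun e he => dif_neg he
    rw [sum_restrict H A _ hvan s x, sum_restrict H A _ hvan t x]
    have hsimp : ∀ u : E → V,
        (∑ e : {e : E // e ∈ A}, if u e.1 = x then (if h : e.1 ∈ A then φ.1 ⟨e.1, h⟩ else 0) else 0)
        = ∑ e : {e : E // e ∈ A}, if u e.1 = x then φ.1 e else 0 := by
      intro u
      refine Finset.sum_congr rfl fun e _ => ?_
      rw [dif_pos e.2]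
    rw [hsimp s, hsimp t]
    exact hx
  · -- restriction is in the kernel
    rw [AddMonoidHom.mem_ker]
    funext x
    rw [bmap_apply, Pi.zero_apply, sub_eq_zero]
    have h1 := φ.2.1 x
    rw [sum_restrict H A φ.1 φ.2.2 s x, sum_restrict H A φ.1 φ.2.2 t x] at h1
    exact h1
  · -- left inverse
    intro φ
    refine Subtype.ext (funext fun e => ?_)
    simp [dif_pos e.2]
  · -- right inverse
    intro φ
    refine Subtype.ext (funext fun e => ?_)
    dsimp only
    by_cases h : e ∈ A
    · rw [dif_pos h]
    · rw [dif_neg h]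
      exact (φ.2.2 e h).symm

lemma nz_count (s t : E → V) :
    nzFlowCount s t Finset.univ H
      = Nat.card {φ : E → H //
          (∀ x : V, (∑ e : E, if s e = x then φ e else 0)
            = (∑ e : E, if t e = x then φ e else 0)) ∧ ∀ e, φ e ≠ 0} := by
  rw [nzFlowCount]
  apply Nat.card_congr
  have hsum : ∀ (f : E → H), (∑ e : {e : E // e ∈ (Finset.univ : Finset E)}, f e.1)
      = ∑ e : E, f e :=
    fun f => Fintype.sum_equiv (Equiv.subtypeUnivEquiv fun e => Finset.mem_univ e) _ _
      (fun e => rfl)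
  refine ⟨fun φ => ⟨fun e => φ.1 ⟨e, Finset.mem_univ e⟩, ?_, fun e => φ.2.2 ⟨e, Finset.mem_univ e⟩⟩,
    fun φ => ⟨fun e => φ.1 e.1, ?_, fun e => φ.2.2 e.1⟩, fun φ => rfl, fun φ => rfl⟩
  · intro x
    have h1 := φ.2.1 x
    calc (∑ e : E, if s e = x then φ.1 ⟨e, Finset.mem_univ e⟩ else 0)
        = ∑ e : {e : E // e ∈ (Finset.univ : Finset E)},
            if s e.1 = x then φ.1 e else 0 :=
          (hsum (fun e => if s e = x then φ.1 ⟨e, Finset.mem_univ e⟩ else 0)).symm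
      _ = ∑ e : {e : E // e ∈ (Finset.univ : Finset E)},
            if t e.1 = x then φ.1 e else 0 := h1
      _ = ∑ e : E, if t e = x then φ.1 ⟨e, Finset.mem_univ e⟩ else 0 :=
          hsum (fun e => if t e = x then φ.1 ⟨e, Finset.mem_univ e⟩ else 0)
  · intro x
    have h1 := φ.2.1 x
    calc (∑ e : {e : E // e ∈ (Finset.univ : Finset E)}, if s e.1 = x then φ.1 e.1 else 0)
        = ∑ e : E, if s e = x then φ.1 e else 0 :=
          hsum (fun e => if s e = x then φ.1 e else 0)
      _ = ∑ e : E, if t e = x then φ.1 e else 0 := h1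
      _ = ∑ e : {e : E // e ∈ (Finset.univ : Finset E)}, if t e.1 = x then φ.1 e.1 else 0 :=
          (hsum (fun e => if t e = x then φ.1 e else 0)).symm

end Glue

theorem flow_whitney_expansion {V E : Type*} [Fintype V] [Fintype E]
    [DecidableEq V] [DecidableEq E]
    (ε : E → Sym2 V) (s t : E → V) (hst : ∀ e, ε e = s(s e, t e))
    (q : ℕ) (hq : 0 < q) (H : Type*) [AddCommGroup H] [Fintype H]
    (hH : Fintype.card H = q) :
    (nzFlowCount s t Finset.univ H : ℚ) =
      ∑ A ∈ Finset.univ.powerset, (-1) ^ (Fintype.card E + A.card) *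
        (q : ℚ) ^ ((A.card : ℤ) - (Fintype.card V : ℤ) + (multigraphComponents ε A : ℤ)) := by
  classical
  have hq0 : (q : ℚ) ≠ 0 := Nat.cast_ne_zero.2 hq.ne'
  -- step 1: each `q`-power is the cardinality of the kernel of the boundary map
  have hterm : ∀ A : Finset E,
      (q : ℚ) ^ ((A.card : ℤ) - (Fintype.card V : ℤ) + (multigraphComponents ε A : ℤ))
      = (Nat.card (bmap H s t A).ker : ℚ) := by
    intro A
    have hn := bmap_ker_card H ε s t hst A
    rw [hH] at hn
    have hq' : (Nat.card (bmap H s t A).ker : ℚ) * (q : ℚ) ^ (Fintype.card V)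
        = (q : ℚ) ^ (A.card + multigraphComponents ε A) := by
      exact_mod_cast congrArg (Nat.cast : ℕ → ℚ) hn
    have hexp : ((A.card : ℤ) - (Fintype.card V : ℤ) + (multigraphComponents ε A : ℤ))
        = ((A.card + multigraphComponents ε A : ℕ) : ℤ) - ((Fintype.card V : ℕ) : ℤ) := by
      push_cast; ring
    rw [hexp, zpow_sub₀ hq0, zpow_natCast, zpow_natCast, div_eq_iff (pow_ne_zero _ hq0)]
    exact hq'.symm
  -- step 2: the kernel cardinality as an indicator sum
  have hker : ∀ A : Finset E, (Nat.card (bmap H s t A).ker : ℚ)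
      = ∑ φ : E → H, if ((∀ x : V, (∑ e : E, if s e = x then φ e else 0)
            = (∑ e : E, if t e = x then φ e else 0)) ∧ ∀ e ∉ A, φ e = 0) then (1:ℚ) else 0 := by
    intro A
    rw [ker_count H s t A, card_subtype_q]
  have indmul : ∀ (P Q : Prop) [Decidable P] [Decidable Q] [Decidable (P ∧ Q)],
      (if P ∧ Q then (1:ℚ) else 0) = (if P then (1:ℚ) else 0) * (if Q then (1:ℚ) else 0) := by
    intro P Q _ _ _
    by_cases hP : P <;> by_cases hQ : Q <;> simp [hP, hQ]
  have hsupp : ∀ (φ : E → H) (A : Finset E),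
      (∀ e ∉ A, φ e = 0) ↔ (Finset.univ.filter (fun e => φ e ≠ 0) ⊆ A) := by
    intro φ A
    constructor
    · intro h e he
      rw [Finset.mem_filter] at he
      by_contra heA
      exact he.2 (h e heA)
    · intro h e heA
      by_contra hne
      exact heA (h (Finset.mem_filter.2 ⟨Finset.mem_univ e, hne⟩))
  rw [nz_count H s t]
  refine Eq.symm ?_
  calc ∑ A ∈ (Finset.univ : Finset E).powerset, (-1:ℚ) ^ (Fintype.card E + A.card) *
        (q : ℚ) ^ ((A.card : ℤ) - (Fintype.card V : ℤ) + (multigraphComponents ε A : ℤ))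
      = ∑ A ∈ (Finset.univ : Finset E).powerset, ∑ φ : E → H,
          (-1:ℚ) ^ (Fintype.card E + A.card) *
          ((if (∀ x : V, (∑ e : E, if s e = x then φ e else 0)
              = (∑ e : E, if t e = x then φ e else 0)) then (1:ℚ) else 0) *
           (if Finset.univ.filter (fun e => φ e ≠ 0) ⊆ A then (1:ℚ) else 0)) := by
        refine Finset.sum_congr rfl fun A _ => ?_
        rw [hterm A, hker A, Finset.mul_sum]
        refine Finset.sum_congr rfl fun φ _ => ?_
        congr 1
        have hiff : ((∀ x : V, (∑ e : E, if s e = x then φ e else 0)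
              = (∑ e : E, if t e = x then φ e else 0)) ∧ ∀ e ∉ A, φ e = 0)
            ↔ ((∀ x : V, (∑ e : E, if s e = x then φ e else 0)
              = (∑ e : E, if t e = x then φ e else 0))
                ∧ Finset.univ.filter (fun e => φ e ≠ 0) ⊆ A) :=
          and_congr_right' (hsupp φ A)
        rw [if_congr hiff rfl rfl, indmul]
    _ = ∑ φ : E → H, ∑ A ∈ (Finset.univ : Finset E).powerset,
          (-1:ℚ) ^ (Fintype.card E + A.card) *
          ((if (∀ x : V, (∑ e : E, if s e = x then φ e else 0)
              = (∑ e : E, if t e = x then φ e else 0)) then (1:ℚ) else 0) *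
           (if Finset.univ.filter (fun e => φ e ≠ 0) ⊆ A then (1:ℚ) else 0)) :=
        Finset.sum_comm
    _ = ∑ φ : E → H,
          (if (∀ x : V, (∑ e : E, if s e = x then φ e else 0)
              = (∑ e : E, if t e = x then φ e else 0)) then (1:ℚ) else 0) *
          (if Finset.univ.filter (fun e => φ e ≠ 0) = Finset.univ then (1:ℚ) else 0) := by
        refine Finset.sum_congr rfl fun φ _ => ?_
        have hrearr : ∀ A : Finset E, (-1:ℚ) ^ (Fintype.card E + A.card) *
            ((if (∀ x : V, (∑ e : E, if s e = x then φ e else 0)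
                = (∑ e : E, if t e = x then φ e else 0)) then (1:ℚ) else 0) *
             (if Finset.univ.filter (fun e => φ e ≠ 0) ⊆ A then (1:ℚ) else 0))
            = (if (∀ x : V, (∑ e : E, if s e = x then φ e else 0)
                = (∑ e : E, if t e = x then φ e else 0)) then (1:ℚ) else 0) *
              ((-1:ℚ) ^ (Fintype.card E + A.card) *
               (if Finset.univ.filter (fun e => φ e ≠ 0) ⊆ A then (1:ℚ) else 0)) := by
          intro A; ring
        rw [Finset.sum_congr rfl fun A _ => hrearr A, ← Finset.mul_sum,
          ie_lemma (Finset.univ.filter (fun e => φ e ≠ 0))]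
    _ = ∑ φ : E → H, (if ((∀ x : V, (∑ e : E, if s e = x then φ e else 0)
            = (∑ e : E, if t e = x then φ e else 0)) ∧ ∀ e, φ e ≠ 0) then (1:ℚ) else 0) := by
        refine Finset.sum_congr rfl fun φ _ => ?_
        rw [indmul]
        congr 1
        have : (Finset.univ.filter (fun e => φ e ≠ 0) = Finset.univ) ↔ ∀ e, φ e ≠ 0 := by
          rw [Finset.filter_eq_self]
          simp
        rw [if_congr this rfl rfl]
    _ = (Nat.card {φ : E → H //
          (∀ x : V, (∑ e : E, if s e = x then φ e else 0)
            = (∑ e : E, if t e = x then φ e else 0)) ∧ ∀ e, φ e ≠ 0} : ℚ) :=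
        (card_subtype_q _).symm
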